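/- (Key step in the proof of Lemma 8.) Every path from v0 to a vertex x that contains some vertex u with u ∉ F and u ≠ x has cost at least ⨅ {D u + w u v : E u v ∧ u ∉ F}, the infimum over all edges whose tail is unfixed. -/

import Mathlib

open scoped ENNReal

variable {V : Type*}

/-- `IsPath E v0 x p` means `p` is a finite sequence of vertices starting at `v0`,
ending at `x`, with consecutive vertices joined by edges of `E`. -/
def IsPath (E : V → V → Prop) (v0 x : V) (p : List V) : Prop :=
  p.Chain' E ∧ p.head? = some v0 ∧ p.getLast? = some x

/-- The cost of a path: the sum of the weights of its consecutive edges. -/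
noncomputable def pathCost (w : V → V → ℝ≥0∞) (p : List V) : ℝ≥0∞ :=
  ((p.zip p.tail).map fun q => w q.1 q.2).sum

/-- `cost E w v0 x` : the infimum of the costs of all paths from `v0` to `x`
(`∞` if `x` is unreachable from `v0`). -/
noncomputable def cost (E : V → V → Prop) (w : V → V → ℝ≥0∞) (v0 x : V) : ℝ≥0∞ :=
  ⨅ p : {p : List V // IsPath E v0 x p}, pathCost w p.1

/-- An `F`-path from `v0` to `x` : a path all of whose vertices other than the
final vertex `x` lie in `F`. `Dfun E w v0 F x` is the infimum of the costs of
`F`-paths from `v0` to `x` (`∞` if no `F`-path to `x` exists). -/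
noncomputable def Dfun (E : V → V → Prop) (w : V → V → ℝ≥0∞) (v0 : V) (F : Set V)
    (x : V) : ℝ≥0∞ :=
  ⨅ p : {p : List V // IsPath E v0 x p ∧ ∀ v ∈ p.dropLast, v ∈ F}, pathCost w p.1

lemma pathCost_cons_cons (w : V → V → ℝ≥0∞) (a b : V) (l : List V) :
    pathCost w (a :: b :: l) = w a b + pathCost w (b :: l) := by
  simp [pathCost]

lemma pathCost_concat (w : V → V → ℝ≥0∞) :
    ∀ (q : List V) (a b : V), q.getLast? = some a →
      pathCost w (q ++ [b]) = pathCost w q + w a b := by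
  intro q
  induction q with
  | nil => simp
  | cons h t ih =>
    intro a b hl
    cases t with
    | nil =>
      simp at hl
      subst hl
      simp [pathCost]
    | cons h' t' =>
      have hl' : (h' :: t').getLast? = some a := by
        rwa [List.getLast?_cons_cons] at hl
      have : (h :: h' :: t') ++ [b] = h :: h' :: (t' ++ [b]) := rfl
      rw [this, pathCost_cons_cons]
      have := ih a b hl'
      rw [List.cons_append] at this
      rw [this, pathCost_cons_cons, add_assoc]

lemma Dfun_step (E : V → V → Prop) (w : V → V → ℝ≥0∞) (v0 : V) (F : Set V)
    {a b : V} (ha : a ∈ F) (hab : E a b) :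
    Dfun E w v0 F b ≤ Dfun E w v0 F a + w a b := by
  simp only [Dfun]
  rw [ENNReal.iInf_add]
  refine le_iInf fun q => ?_
  obtain ⟨q, ⟨⟨hch, hhd, hlast⟩, hF⟩⟩ := q
  have hq : q ≠ [] := by rintro rfl; simp at hhd
  have hmem : ∀ v ∈ q, v ∈ F := by
    intro v hv
    rw [← List.dropLast_concat_getLast hq] at hv
    rcases List.mem_append.1 hv with h | h
    · exact hF v h
    · have : q.getLast hq = a := by
        rw [List.getLast?_eq_getLast hq] at hlast
        exact Option.some_injective _ hlast
      simp at h
      rw [h, this]; exact ha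
  refine iInf_le_of_le ⟨q ++ [b], ⟨?_, ?_, ?_⟩, ?_⟩ ?_
  · refine List.IsChain.append hch (List.isChain_singleton b) ?_
    intro x hx y hy
    simp at hy
    rw [hlast] at hx
    simp at hx
    rw [← hx, ← hy]; exact hab
  · cases q with
    | nil => exact absurd rfl hq
    | cons q0 q' => simpa using hhd
  · exact List.getLast?_concat
  · intro v hv
    rw [List.dropLast_concat] at hv
    exact hmem v hv
  · rw [pathCost_concat w q a b hlast]

lemma key_aux (E : V → V → Prop) (w : V → V → ℝ≥0∞) (v0 : V) (F : Set V) (x : V) :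
    ∀ (p : List V) (a : V), a ∈ F → p.Chain' E → p.head? = some a →
      p.getLast? = some x → (∃ u ∈ p, u ∉ F ∧ u ≠ x) →
      ∀ c, Dfun E w v0 F a ≤ c →
      (⨅ e : {e : V × V // E e.1 e.2 ∧ e.1 ∉ F},
        (Dfun E w v0 F e.1.1 + w e.1.1 e.1.2)) ≤ c + pathCost w p := by
  intro p
  induction p with
  | nil => rintro a _ _ _ _ ⟨u, hu, _⟩ _ _; simp at hu
  | cons a' tl ih =>
    rintro a haF hch hhd hlast ⟨u, hu, huF, hux⟩ c hc
    have haa : a' = a := by simpa using hhd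
    subst haa
    have hua : u ≠ a' := fun h => huF (h ▸ haF)
    cases tl with
    | nil =>
      have : a' = x := by simpa using hlast
      simp at hu
      exact absurd (hu ▸ this) hux
    | cons b tl' =>
      have hab : E a' b := (List.isChain_cons_cons.1 hch).1
      have hch' : (b :: tl').Chain' E := (List.isChain_cons_cons.1 hch).2
      have hlast' : (b :: tl').getLast? = some x := by
        rwa [List.getLast?_cons_cons] at hlast
      have hu' : u ∈ b :: tl' := by
        rcases List.mem_cons.1 hu with h | h
        · exact absurd h hua
        · exact h
      rw [pathCost_cons_cons]
      by_cases hbF : b ∈ F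
      · have := ih b hbF hch' rfl hlast' ⟨u, hu', huF, hux⟩ (c + w a' b)
          (le_trans (Dfun_step E w v0 F haF hab) (add_le_add_left hc _))
        calc _ ≤ (c + w a' b) + pathCost w (b :: tl') := this
        _ = c + (w a' b + pathCost w (b :: tl')) := by rw [add_assoc]
      · cases tl' with
        | nil =>
          have hbx : b = x := by simpa using hlast'
          rcases List.mem_cons.1 hu' with h | h
          · exact absurd (h ▸ hbx) hux
          · simp at h
        | cons d tl'' =>
          have hbd : E b d := (List.isChain_cons_cons.1 hch').1
          refine le_trans (iInf_le _ ⟨(b, d), hbd, hbF⟩) ?_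
          have h1 : Dfun E w v0 F b + w b d ≤ (c + w a' b) + w b d :=
            add_le_add_left (le_trans (Dfun_step E w v0 F haF hab)
              (add_le_add_left hc _)) _
          refine le_trans h1 ?_
          rw [pathCost_cons_cons]
          calc (c + w a' b) + w b d = c + (w a' b + (w b d + 0)) := by ring
          _ ≤ c + (w a' b + (w b d + pathCost w (d :: tl''))) := by
              gcongr; exact zero_le

/-- Key step in the proof of Lemma 8: every path from `v0` to `x` passing through
some unfixed vertex `u ≠ x` has cost at least
`⨅ {D u + w u v : E u v ∧ u ∉ F}`. -/
theorem path_through_unfixed_cost [Fintype V] (E : V → V → Prop) (w : V → V → ℝ≥0∞)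
    (hpos : ∀ u v, E u v → 0 < w u v) (hfin : ∀ u v, E u v → w u v < ⊤)
    (v0 : V) (F : Set V) (hv0 : v0 ∈ F) (x : V)
    (p : List V) (hp : IsPath E v0 x p)
    (u : V) (hu : u ∈ p) (huF : u ∉ F) (hux : u ≠ x) :
    (⨅ e : {e : V × V // E e.1 e.2 ∧ e.1 ∉ F},
        (Dfun E w v0 F e.1.1 + w e.1.1 e.1.2)) ≤ pathCost w p := by
  obtain ⟨hch, hhd, hlast⟩ := hp
  have hD0 : Dfun E w v0 F v0 ≤ 0 := by
    refine iInf_le_of_le ⟨[v0], ⟨⟨?_, rfl, rfl⟩, ?_⟩⟩ ?_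
    · exact List.isChain_singleton v0
    · simp
    · simp [pathCost]
  have := key_aux E w v0 F x p v0 hv0 hch hhd hlast ⟨u, hu, huF, hux⟩ 0 hD0
  simpa using this
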